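/- Let G be a simple graph on n vertices with no K_{2,7} subgraph, minimum degree greater than d/3 where d ≥ 6 is the average degree, and maximum degree at least 18√n. Then d < √n + 3. -/

import Mathlib

theorem stmt_16 {V : Type*} [Fintype V] [DecidableEq V] (n : ℕ) (hn : Fintype.card V = n)
    (G : SimpleGraph V) [DecidableRel G.Adj]
    (hK27 : ¬ ∃ (a b : V) (S : Finset V), a ≠ b ∧ S.card = 7 ∧ a ∉ S ∧ b ∉ S ∧
      ∀ s ∈ S, G.Adj a s ∧ G.Adj b s)
    (d : ℝ) (hd : d = (∑ v : V, (G.degree v : ℝ)) / n) (hd6 : 6 ≤ d)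
    (hmin : ∀ v : V, d / 3 < (G.degree v : ℝ))
    (hmax : ∃ u : V, 18 * Real.sqrt n ≤ (G.degree u : ℝ)) :
    d < Real.sqrt n + 3 := by
  classical
  obtain ⟨u, hu⟩ := hmax
  have hn1 : 1 ≤ n := by
    rw [← hn]; exact Fintype.card_pos_iff.mpr ⟨u⟩
  have hs1 : (1:ℝ) ≤ Real.sqrt n := by
    rw [show (1:ℝ) = Real.sqrt 1 by simp]
    exact Real.sqrt_le_sqrt (by exact_mod_cast hn1)
  -- common neighbors bound
  have hcommon : ∀ x : V, x ≠ u → (G.neighborFinset u ∩ G.neighborFinset x).card ≤ 6 := by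
    intro x hx
    by_contra h
    push_neg at h
    obtain ⟨S, hSsub, hScard⟩ := Finset.exists_subset_card_eq h
    refine hK27 ⟨u, x, S, hx.symm, hScard, ?_, ?_, ?_⟩
    · intro hmem
      have := hSsub hmem
      simp only [Finset.mem_inter, SimpleGraph.mem_neighborFinset] at this
      exact G.irrefl this.1
    · intro hmem
      have := hSsub hmem
      simp only [Finset.mem_inter, SimpleGraph.mem_neighborFinset] at this
      exact G.irrefl this.2
    · intro s hs
      have := hSsub hs
      simp only [Finset.mem_inter, SimpleGraph.mem_neighborFinset] at this
      exact this
  set P : Finset (V × V) :=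
    (G.neighborFinset u ×ˢ Finset.univ).filter (fun p => G.Adj p.1 p.2 ∧ p.2 ≠ u) with hP
  have hmemP : ∀ p : V × V, p ∈ P ↔ G.Adj u p.1 ∧ G.Adj p.1 p.2 ∧ p.2 ≠ u := by
    intro p
    simp [hP, SimpleGraph.mem_neighborFinset]
  -- upper bound
  have hupper : P.card ≤ 6 * n := by
    have hfib : P.card = ∑ x : V, (P.filter (fun p => p.2 = x)).card :=
      Finset.card_eq_sum_card_fiberwise (fun p _ => Finset.mem_univ p.2)
    rw [hfib]
    calc ∑ x : V, (P.filter (fun p => p.2 = x)).card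
        ≤ ∑ _x : V, 6 := by
          apply Finset.sum_le_sum
          intro x _
          by_cases hxu : x = u
          · have : P.filter (fun p => p.2 = x) = ∅ := by
              apply Finset.filter_false_of_mem
              intro p hp hpx
              exact ((hmemP p).mp hp).2.2 (hpx.trans hxu)
            simp [this]
          · calc (P.filter (fun p => p.2 = x)).card
                ≤ (G.neighborFinset u ∩ G.neighborFinset x).card := by
                  apply Finset.card_le_card_of_injOn Prod.fst
                  · intro p hp
                    simp only [Finset.mem_coe, Finset.mem_filter] at hp
                    obtain ⟨hadj, hpx⟩ := hp
                    obtain ⟨h1, h2, h3⟩ := (hmemP p).mp hadj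
                    simp only [Finset.mem_coe, Finset.mem_inter, SimpleGraph.mem_neighborFinset]
                    exact ⟨h1, by rw [← hpx]; exact h2.symm⟩
                  · intro p hp q hq hpq
                    simp only [Finset.coe_filter, Set.mem_setOf_eq] at hp hq
                    exact Prod.ext hpq (hp.2.trans hq.2.symm)
              _ ≤ 6 := hcommon x hxu
      _ = 6 * n := by
          rw [Finset.sum_const, Finset.card_univ, hn, smul_eq_mul, mul_comm]
  -- lower bound
  have hdeg3 : ∀ w : V, 1 ≤ G.degree w := by
    intro w
    have h1 := hmin w
    have : (0:ℝ) < (G.degree w : ℝ) := lt_of_le_of_lt (by linarith) h1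
    exact_mod_cast this
  have hlower : ∀ w ∈ G.neighborFinset u,
      (G.degree w : ℝ) - 1 ≤ ((P.filter (fun p => p.1 = w)).card : ℝ) := by
    intro w hw
    have hwadj : G.Adj u w := (SimpleGraph.mem_neighborFinset _ _ _).mp hw
    have hinj : ((G.neighborFinset w).erase u).card ≤ (P.filter (fun p => p.1 = w)).card := by
      apply Finset.card_le_card_of_injOn (fun x => (w, x))
      · intro x hx
        simp only [Finset.mem_coe, Finset.mem_erase, SimpleGraph.mem_neighborFinset] at hx
        simp only [Finset.mem_coe, Finset.mem_filter]
        exact ⟨(hmemP (w, x)).mpr ⟨hwadj, hx.2, hx.1⟩, trivial⟩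
      · intro x _ y _ hxy
        exact (Prod.ext_iff.mp hxy).2
    have hde : G.degree w - 1 ≤ ((G.neighborFinset w).erase u).card := by
      have := Finset.pred_card_le_card_erase (s := G.neighborFinset w) (a := u)
      rwa [SimpleGraph.card_neighborFinset_eq_degree] at this
    have hnat : G.degree w - 1 ≤ (P.filter (fun p => p.1 = w)).card := le_trans hde hinj
    have hc : ((G.degree w - 1 : ℕ) : ℝ) ≤ ((P.filter (fun p => p.1 = w)).card : ℝ) := by
      exact_mod_cast hnat
    rwa [Nat.cast_sub (hdeg3 w), Nat.cast_one] at hc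
  have hfib2 : P.card = ∑ w ∈ G.neighborFinset u, (P.filter (fun p => p.1 = w)).card := by
    apply Finset.card_eq_sum_card_fiberwise
    intro p hp
    exact (SimpleGraph.mem_neighborFinset _ _ _).mpr ((hmemP p).mp hp).1
  have hNu : (G.neighborFinset u).Nonempty := by
    rw [← Finset.card_pos, SimpleGraph.card_neighborFinset_eq_degree]
    exact hdeg3 u
  have hstrict : (G.degree u : ℝ) * (d / 3 - 1) < (P.card : ℝ) := by
    have h1 : ∑ _w ∈ G.neighborFinset u, (d / 3 - 1) <
        ∑ w ∈ G.neighborFinset u, ((G.degree w : ℝ) - 1) := by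
      apply Finset.sum_lt_sum_of_nonempty hNu
      intro w _
      have := hmin w
      linarith
    have h2 : ∑ w ∈ G.neighborFinset u, ((G.degree w : ℝ) - 1) ≤ (P.card : ℝ) := by
      rw [hfib2, Nat.cast_sum]
      exact Finset.sum_le_sum hlower
    rw [Finset.sum_const, SimpleGraph.card_neighborFinset_eq_degree, nsmul_eq_mul] at h1
    linarith
  have hkey : 18 * Real.sqrt n * (d / 3 - 1) < 6 * (n : ℝ) := by
    have h6n : (P.card : ℝ) ≤ 6 * n := by exact_mod_cast hupper
    have hdu : 18 * Real.sqrt n * (d / 3 - 1) ≤ (G.degree u : ℝ) * (d / 3 - 1) := by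
      apply mul_le_mul_of_nonneg_right hu
      linarith
    linarith
  have hss : Real.sqrt n * Real.sqrt n = (n : ℝ) := Real.mul_self_sqrt (by positivity)
  nlinarith [hkey, hss, hs1]
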